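/- For every s > 0, 1/(s + K_{n=1}^∞ (n²/s)) = 2·∫_0^1 x^s/(1+x²) dx, where s + K_{n=1}^∞ (n²/s) denotes the limit of the convergents of the generalized continued fraction with integer part s, partial numerators a_n = n² and partial denominators b_n = s. -/

import Mathlib

open Filter Real

/-- Numerators of the convergents of a generalized continued fraction with
integer part `b₀`, partial numerators `a n` and partial denominators `b n` (for `n ≥ 1`). -/
noncomputable def cfNum (b₀ : ℝ) (a b : ℕ → ℝ) : ℕ → ℝ
  | 0 => b₀
  | 1 => b 1 * b₀ + a 1
  | n + 2 => b (n + 2) * cfNum b₀ a b (n + 1) + a (n + 2) * cfNum b₀ a b n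

/-- Denominators of the convergents of a generalized continued fraction. -/
noncomputable def cfDen (a b : ℕ → ℝ) : ℕ → ℝ
  | 0 => 1
  | 1 => b 1
  | n + 2 => b (n + 2) * cfDen a b (n + 1) + a (n + 2) * cfDen a b n

/-- `IsCFLimit b₀ a b L` means: the convergents of the generalized continued fraction
`b₀ + a 1 / (b 1 + a 2 / (b 2 + ⋯))` tend to `L`. -/
def IsCFLimit (b₀ : ℝ) (a b : ℕ → ℝ) (L : ℝ) : Prop :=
  Filter.Tendsto (fun n => cfNum b₀ a b n / cfDen a b n) Filter.atTop (nhds L)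



noncomputable def eulF (s : ℝ) (m : ℕ) : ℝ :=
  ∫ x in (0:ℝ)..1, 2 * x ^ s * (1 - x^2)^m / (1 + x^2)^(m+1)

lemma eulF_cont (s : ℝ) (hs : 0 < s) (m : ℕ) :
    Continuous (fun x : ℝ => 2 * x ^ s * (1 - x^2)^m / (1 + x^2)^(m+1)) := by
  have h1 : Continuous (fun x : ℝ => x ^ s) :=
    continuous_iff_continuousAt.mpr fun x => Real.continuousAt_rpow_const x s (Or.inr hs.le)
  have h2 : Continuous (fun x : ℝ => (1 - x^2)^m) := by continuity
  have h3 : Continuous (fun x : ℝ => (1 + x^2)^(m+1)) := by continuity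
  exact ((continuous_const.mul h1).mul h2).div h3 (fun x => by positivity)

lemma eulF_pos (s : ℝ) (hs : 0 < s) (m : ℕ) : 0 < eulF s m := by
  apply intervalIntegral.intervalIntegral_pos_of_pos_on
    ((eulF_cont s hs m).continuousOn.intervalIntegrable)
  · intro x hx
    have h1 : 0 < x := hx.1
    have h2 : x < 1 := hx.2
    have : (0:ℝ) < x ^ s := Real.rpow_pos_of_pos h1 s
    have hu : (0:ℝ) < 1 - x^2 := by nlinarith
    positivity
  · norm_num

lemma eul_hasDeriv (s : ℝ) (hs : 0 < s) (m : ℕ) (x : ℝ) :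
    HasDerivAt (fun y : ℝ => 2 * y ^ (s+1) * (1 - y^2)^m / (1 + y^2)^(m+1))
      (s * (2 * x ^ s * (1 - x^2)^m / (1 + x^2)^(m+1))
        + ((m:ℝ)+1) * (2 * x ^ s * (1 - x^2)^(m+1) / (1 + x^2)^(m+2))
        - (m:ℝ) * (2 * x ^ s * (1 - x^2)^(m-1) / (1 + x^2)^m)) x := by
  have h1 : HasDerivAt (fun y : ℝ => y ^ (s+1)) ((s+1) * x ^ s) x := by
    have := Real.hasDerivAt_rpow_const (x := x) (p := s+1) (Or.inr (by linarith))
    simpa using this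
  have hinner : HasDerivAt (fun y : ℝ => 1 - y^2) (-(2*x)) x := by
    simpa using ((hasDerivAt_pow 2 x).const_sub 1)
  have hinner' : HasDerivAt (fun y : ℝ => 1 + y^2) (2*x) x := by
    simpa using ((hasDerivAt_pow 2 x).const_add 1)
  have h2 : HasDerivAt (fun y : ℝ => (1 - y^2)^m)
      ((m:ℝ) * (1 - x^2)^(m-1) * (-(2*x))) x := hinner.pow m
  have h3 : HasDerivAt (fun y : ℝ => (1 + y^2)^(m+1))
      (((m:ℝ)+1) * (1 + x^2)^m * (2*x)) x := by
    have := hinner'.pow (m+1)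
    simp at this
    exact this
  have hne : ((1:ℝ) + x^2)^(m+1) ≠ 0 := by positivity
  have hD : HasDerivAt (fun y : ℝ => 2 * y ^ (s+1) * (1 - y^2)^m / (1 + y^2)^(m+1))
      (((2 * ((s + 1) * x ^ s) * (1 - x ^ 2) ^ m + 2 * x ^ (s + 1) * ((m:ℝ) * (1 - x ^ 2) ^ (m - 1) * -(2 * x))) *
          (1 + x ^ 2) ^ (m + 1) - 2 * x ^ (s + 1) * (1 - x ^ 2) ^ m * (((m:ℝ) + 1) * (1 + x ^ 2) ^ m * (2 * x))) /
        ((1 + x ^ 2) ^ (m + 1)) ^ 2) x := (((h1.const_mul 2).mul h2).div h3 hne)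
  convert hD using 1
  rcases eq_or_ne x 0 with rfl | hx
  · have h0 : (0:ℝ) ^ s = 0 := Real.zero_rpow hs.ne'
    have h0' : (0:ℝ) ^ (s+1) = 0 := Real.zero_rpow (by linarith)
    simp [h0, h0']
  · have hx1 : x ^ (s+1) = x ^ s * x := Real.rpow_add_one hx s
    rcases Nat.eq_zero_or_pos m with rfl | hm
    · rw [hx1]; field_simp
      ring
    · obtain ⟨k, rfl⟩ : ∃ k, m = k + 1 := ⟨m - 1, (Nat.succ_pred_eq_of_pos hm).symm⟩
      have hne2 : ((1:ℝ) + x^2) ≠ 0 := by positivity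
      rw [hx1]; field_simp
      push_cast
      ring
lemma eulF_rec0 (s : ℝ) (hs : 0 < s) :
    s * eulF s 0 + eulF s 1 = 1 := by
  have hint : ∀ k : ℕ, IntervalIntegrable
      (fun x : ℝ => 2 * x ^ s * (1 - x^2)^k / (1 + x^2)^(k+1)) MeasureTheory.volume 0 1 :=
    fun k => (eulF_cont s hs k).continuousOn.intervalIntegrable
  have hftc := intervalIntegral.integral_eq_sub_of_hasDerivAt
    (a := 0) (b := 1) (fun x _ => eul_hasDeriv s hs 0 x)
    (by
      apply IntervalIntegrable.sub
      apply IntervalIntegrable.add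
      · exact (hint 0).const_mul s
      · exact (hint 1).const_mul _
      · simpa using ((hint 0).const_mul 0))
  rw [intervalIntegral.integral_sub (((hint 0).const_mul s).add ((hint 1).const_mul _))
      (by simpa using ((hint 0).const_mul (0:ℝ))),
    intervalIntegral.integral_add ((hint 0).const_mul s) ((hint 1).const_mul _),
    intervalIntegral.integral_const_mul, intervalIntegral.integral_const_mul,
    intervalIntegral.integral_const_mul] at hftc
  have h1 : (1:ℝ) ^ (s+1) = 1 := Real.one_rpow _
  have h0 : (0:ℝ) ^ (s+1) = 0 := Real.zero_rpow (by linarith)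
  simp only [Nat.cast_zero, zero_mul, sub_zero, zero_add, one_mul, h1, h0] at hftc
  have e0 : eulF s 0 = ∫ x in (0:ℝ)..1, 2*x^s/(1+x^2) := by
    rw [eulF]; norm_num
  have e1 : eulF s 1 = ∫ x in (0:ℝ)..1, 2*x^s*(1-x^2)/(1+x^2)^2 := by
    rw [eulF]; norm_num
  norm_num at hftc
  rw [e0, e1]; linarith

lemma eulF_recS (s : ℝ) (hs : 0 < s) (k : ℕ) :
    s * eulF s (k+1) + ((k:ℝ)+2) * eulF s (k+2) = ((k:ℝ)+1) * eulF s k := by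
  have hint : ∀ j : ℕ, IntervalIntegrable
      (fun x : ℝ => 2 * x ^ s * (1 - x^2)^j / (1 + x^2)^(j+1)) MeasureTheory.volume 0 1 :=
    fun j => (eulF_cont s hs j).continuousOn.intervalIntegrable
  have hftc := intervalIntegral.integral_eq_sub_of_hasDerivAt
    (a := 0) (b := 1) (fun x _ => eul_hasDeriv s hs (k+1) x)
    (by
      apply IntervalIntegrable.sub
      apply IntervalIntegrable.add
      · exact (hint (k+1)).const_mul s
      · exact (hint (k+2)).const_mul _
      · simpa using ((hint k).const_mul ((k:ℝ)+1)))
  rw [intervalIntegral.integral_sub (((hint (k+1)).const_mul s).add ((hint (k+2)).const_mul _))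
      (by simpa using ((hint k).const_mul ((k:ℝ)+1))),
    intervalIntegral.integral_add ((hint (k+1)).const_mul s) ((hint (k+2)).const_mul _),
    intervalIntegral.integral_const_mul, intervalIntegral.integral_const_mul,
    intervalIntegral.integral_const_mul] at hftc
  have h1 : (1:ℝ) ^ (s+1) = 1 := Real.one_rpow _
  have h0 : (0:ℝ) ^ (s+1) = 0 := Real.zero_rpow (by linarith)
  have hz : ((1:ℝ) - 1^2)^(k+1) = 0 := by norm_num
  simp only [h1, h0, hz] at hftc
  rw [eulF, eulF, eulF]
  simp only [show k+1+1 = k+2 from rfl] at hftc ⊢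
  norm_num at hftc
  push_cast at hftc ⊢
  linarith [hftc]
section seqs
variable (s : ℝ)

noncomputable def eulP (s : ℝ) : ℕ → ℝ := cfNum s (fun n => (n : ℝ) ^ 2) (fun _ => s)
noncomputable def eulQ (s : ℝ) : ℕ → ℝ := cfDen (fun n => (n : ℝ) ^ 2) (fun _ => s)
noncomputable def eulH (s : ℝ) (n : ℕ) : ℝ :=
  (-1)^(n+1) * (Nat.factorial (n+1) : ℝ) * eulF s (n+1)

lemma eulP_zero : eulP s 0 = s := rfl
lemma eulP_one : eulP s 1 = s * s + 1 := by
  show (fun _ => s) 1 * s + ((1:ℕ) : ℝ)^2 = s * s + 1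
  norm_num
lemma eulP_rec (n : ℕ) : eulP s (n+2) = s * eulP s (n+1) + (((n:ℝ)+2))^2 * eulP s n := by
  show (fun _ => s) (n+2) * eulP s (n+1) + (((n+2:ℕ)) : ℝ)^2 * eulP s n = _
  push_cast; ring
lemma eulQ_zero : eulQ s 0 = 1 := rfl
lemma eulQ_one : eulQ s 1 = s := rfl
lemma eulQ_rec (n : ℕ) : eulQ s (n+2) = s * eulQ s (n+1) + (((n:ℝ)+2))^2 * eulQ s n := by
  show (fun _ => s) (n+2) * eulQ s (n+1) + (((n+2:ℕ)) : ℝ)^2 * eulQ s n = _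
  push_cast; ring

lemma eulH_rec (hs : 0 < s) (n : ℕ) :
    eulH s (n+2) = s * eulH s (n+1) + (((n:ℝ)+2))^2 * eulH s n := by
  have h := eulF_recS s hs (n+1)
  simp only [show n+1+1 = n+2 from rfl, show n+1+2 = n+3 from rfl] at h
  push_cast at h
  simp only [eulH, show n+2+1 = n+3 from rfl, show n+1+1 = n+2 from rfl]
  have hf3 : ((Nat.factorial (n+3)) : ℝ) = ((n:ℝ)+3) * (Nat.factorial (n+2) : ℝ) := by
    rw [show n+3 = (n+2)+1 from rfl, Nat.factorial_succ]; push_cast; ring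
  have hf2 : ((Nat.factorial (n+2)) : ℝ) = ((n:ℝ)+2) * (Nat.factorial (n+1) : ℝ) := by
    rw [show n+2 = (n+1)+1 from rfl, Nat.factorial_succ]; push_cast; ring
  rw [hf3, hf2]
  linear_combination ((-1:ℝ)^(n+1) * ((n:ℝ)+2) * (Nat.factorial (n+1) : ℝ)) * h

lemma eul_key (hs : 0 < s) : ∀ n, eulF s 0 * eulP s n - eulQ s n = eulH s n := by
  intro n
  induction n using Nat.twoStepInduction with
  | zero =>
    have h0 := eulF_rec0 s hs
    simp only [eulP_zero, eulQ_zero, eulH]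
    norm_num
    linarith
  | one =>
    have h0 := eulF_rec0 s hs
    have h1 := eulF_recS s hs 0
    norm_num at h1
    simp only [eulP_one, eulQ_one, eulH]
    norm_num [Nat.factorial]
    nlinarith [h0, h1]
  | more n ih1 ih2 =>
    rw [eulP_rec, eulQ_rec, eulH_rec s hs]
    linear_combination s * ih2 + ((n:ℝ)+2)^2 * ih1


lemma eulQ_pos (s : ℝ) (hs : 0 < s) : ∀ n, 0 < eulQ s n := by
  intro n
  induction n using Nat.twoStepInduction with
  | zero => rw [eulQ_zero]; norm_num
  | one => rw [eulQ_one]; exact hs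
  | more n ih1 ih2 =>
    rw [eulQ_rec]
    have : (0:ℝ) < ((n:ℝ)+2)^2 := by positivity
    nlinarith

lemma eulP_pos (s : ℝ) (hs : 0 < s) : ∀ n, 0 < eulP s n := by
  intro n
  induction n using Nat.twoStepInduction with
  | zero => rw [eulP_zero]; exact hs
  | one => rw [eulP_one]; nlinarith
  | more n ih1 ih2 =>
    rw [eulP_rec]
    have : (0:ℝ) < ((n:ℝ)+2)^2 := by positivity
    nlinarith

lemma eulPQ (s : ℝ) (hs : 0 < s) : ∀ n, s * eulQ s n ≤ eulP s n := by
  intro n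
  induction n using Nat.twoStepInduction with
  | zero => rw [eulP_zero, eulQ_zero]; norm_num
  | one => rw [eulP_one, eulQ_one]; nlinarith
  | more n ih1 ih2 =>
    rw [eulP_rec, eulQ_rec]
    have h2 : (0:ℝ) < ((n:ℝ)+2)^2 := by positivity
    nlinarith

theorem eul_main (s : ℝ) (hs : 0 < s) (L : ℝ)
    (hL : Tendsto (fun n => eulP s n / eulQ s n) atTop (nhds L)) :
    1 / L = eulF s 0 := by
  have hq := eulQ_pos s hs
  have hp := eulP_pos s hs
  have hsT : ∀ n, s ≤ eulP s n / eulQ s n := fun n =>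
    (le_div_iff₀ (hq n)).mpr (eulPQ s hs n)
  have hsL : s ≤ L := ge_of_tendsto' hL hsT
  have hL0 : 0 < L := lt_of_lt_of_le hs hsL
  have hinv : Tendsto (fun n => eulQ s n / eulP s n) atTop (nhds L⁻¹) := by
    have h := hL.inv₀ (ne_of_gt hL0)
    refine h.congr fun n => ?_
    rw [inv_div]
  have hDH : ∀ n, eulF s 0 - eulQ s n / eulP s n = eulH s n / eulP s n := by
    intro n
    rw [eq_div_iff (ne_of_gt (hp n)), sub_mul, div_mul_cancel₀ _ (ne_of_gt (hp n))]
    exact eul_key s hs n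
  have hHsign : ∀ n, eulH s n * eulH s (n+1) ≤ 0 := by
    intro n
    unfold eulH
    have h1 : (0:ℝ) < (Nat.factorial (n+1) : ℝ) := by positivity
    have h2 : (0:ℝ) < (Nat.factorial (n+1+1) : ℝ) := by positivity
    have h3 := eulF_pos s hs (n+1)
    have h4 := eulF_pos s hs (n+1+1)
    have hsgn : ((-1:ℝ))^(n+1) * (-1:ℝ)^(n+1+1) = -1 := by
      rw [← pow_add, show n+1+(n+1+1) = 2*n+3 from by ring, pow_add, pow_mul]
      norm_num
    calc (-1:ℝ)^(n+1) * (Nat.factorial (n+1) : ℝ) * eulF s (n+1) *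
          ((-1)^(n+1+1) * (Nat.factorial (n+1+1) : ℝ) * eulF s (n+1+1))
        = ((-1:ℝ)^(n+1) * (-1)^(n+1+1)) * ((Nat.factorial (n+1) : ℝ) * eulF s (n+1) *
          ((Nat.factorial (n+1+1) : ℝ) * eulF s (n+1+1))) := by ring
      _ = -((Nat.factorial (n+1) : ℝ) * eulF s (n+1) *
          ((Nat.factorial (n+1+1) : ℝ) * eulF s (n+1+1))) := by rw [hsgn]; ring
      _ ≤ 0 := by nlinarith [mul_pos (mul_pos h1 h3) (mul_pos h2 h4)]
  set D : ℕ → ℝ := fun n => eulF s 0 - eulQ s n / eulP s n with hD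
  have hDsign : ∀ n, D n * D (n+1) ≤ 0 := by
    intro n
    simp only [hD]
    rw [hDH n, hDH (n+1), div_mul_div_comm]
    exact div_nonpos_of_nonpos_of_nonneg (hHsign n) (mul_pos (hp n) (hp (n+1))).le
  have habs : ∀ n, |D n| ≤ |D n - D (n+1)| := by
    intro n
    rcases mul_nonpos_iff.mp (hDsign n) with ⟨h1, h2⟩ | ⟨h1, h2⟩
    · rw [abs_of_nonneg h1, abs_of_nonneg (by linarith)]
      linarith
    · rw [abs_of_nonpos h1, abs_of_nonpos (by linarith)]
      linarith
  have hgD : Tendsto (fun n => |D n - D (n+1)|) atTop (nhds 0) := by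
    have h1 : Tendsto (fun n => eulQ s (n+1) / eulP s (n+1)) atTop (nhds L⁻¹) :=
      hinv.comp (tendsto_add_atTop_nat 1)
    have h2 := h1.sub hinv
    rw [sub_self] at h2
    have h3 : (fun n => D n - D (n+1)) = fun n =>
        eulQ s (n+1) / eulP s (n+1) - eulQ s n / eulP s n := by
      funext n; simp only [hD]; ring
    rw [← abs_zero]
    exact (h3 ▸ h2 : Tendsto (fun n => D n - D (n+1)) atTop (nhds 0)).abs
  have hDzero : Tendsto D atTop (nhds 0) := by
    rw [tendsto_zero_iff_abs_tendsto_zero]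
    exact squeeze_zero (fun n => abs_nonneg _) habs hgD
  have hqp : Tendsto (fun n => eulQ s n / eulP s n) atTop (nhds (eulF s 0)) := by
    have h := (tendsto_const_nhds (x := eulF s 0) (f := atTop)).sub hDzero
    rw [sub_zero] at h
    refine h.congr fun n => ?_
    simp only [hD]; ring
  have : L⁻¹ = eulF s 0 := tendsto_nhds_unique hinv hqp
  rw [one_div, this]

end seqs

theorem euler_integral_formula (s : ℝ) (hs : 0 < s) (L : ℝ)
    (hL : IsCFLimit s (fun n => (n : ℝ) ^ 2) (fun _ => s) L) :
    1 / L = 2 * ∫ x in (0 : ℝ)..1, x ^ s / (1 + x ^ 2) := by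
  have hmain : 1 / L = eulF s 0 := eul_main s hs L hL
  rw [hmain, eulF, ← intervalIntegral.integral_const_mul]
  apply intervalIntegral.integral_congr
  intro x _
  norm_num [mul_div_assoc]
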